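/- (Theorem 4.2) For every n ≥ 0, ∑_{k=0}^{n} d_{n,k} = C(n, ⌊n/2⌋). -/

import Mathlib

/-- The ballot numbers `d_{n,k} = ((k+1)/(n+1)) * C(n+1, (n-k)/2)` when `k ≤ n` and
`n ≡ k (mod 2)`, and `0` otherwise. -/
def dnk (n k : ℕ) : ℕ :=
  if k ≤ n ∧ (n - k) % 2 = 0 then (k + 1) * Nat.choose (n + 1) ((n - k) / 2) / (n + 1)
  else 0

lemma key (n i : ℕ) (h : 2 * i + 2 ≤ n) :
    (n - 2 * i - 1) * Nat.choose (n + 1) (i + 1) + (n + 1) * Nat.choose n i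
      = (n + 1) * Nat.choose n (i + 1) := by
  have h1 := Nat.choose_succ_right_eq n i
  have h2 : Nat.choose (n + 1) (i + 1) = Nat.choose n i + Nat.choose n (i + 1) :=
    Nat.choose_succ_succ n i
  obtain ⟨c, rfl⟩ : ∃ c, n = c + 2 * i + 2 := ⟨n - (2 * i + 2), by omega⟩
  set A := Nat.choose (c + 2 * i + 2) i with hA
  set B := Nat.choose (c + 2 * i + 2) (i + 1) with hB
  have hni : c + 2 * i + 2 - i = c + i + 2 := by omega
  rw [hni] at h1
  have hc1 : c + 2 * i + 2 - 2 * i - 1 = c + 1 := by omega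
  rw [h2, hc1]
  -- goal: (c+1)*(A+B) + (c+2i+3)*A = (c+2i+3)*B, using B*(i+1) = A*(c+i+2)
  have expand : (c + 1) * (A + B) + (c + 2 * i + 2 + 1) * A
      = (c + 1) * B + 2 * (A * (c + i + 2)) := by ring
  rw [expand, ← h1]; ring

lemma choose_mono_half (n i : ℕ) (h : 2 * i + 2 ≤ n) :
    Nat.choose n i ≤ Nat.choose n (i + 1) :=
  Nat.choose_le_succ_of_lt_half_left (by omega)

lemma aux (n : ℕ) : ∀ m, 2 * m ≤ n →
    ∑ j ∈ Finset.range (m + 1), dnk n (n - 2 * j) = Nat.choose n m := by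
  intro m
  induction m with
  | zero =>
    intro _
    simp [dnk]
  | succ i ih =>
    intro hm
    have h2 : 2 * i + 2 ≤ n := by omega
    rw [Finset.sum_range_succ, ih (by omega)]
    have hle := choose_mono_half n i h2
    obtain ⟨d, hd⟩ := Nat.le.dest hle
    have hkey := key n i h2
    have hX : (n - 2 * i - 1) * Nat.choose (n + 1) (i + 1) = (n + 1) * d := by
      have : (n + 1) * (Nat.choose n i + d) = (n + 1) * Nat.choose n i + (n + 1) * d := by ring
      rw [← hd, this] at hkey
      omega
    have hterm : dnk n (n - 2 * (i + 1)) = d := by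
      have hcond : n - 2 * (i + 1) ≤ n ∧ (n - (n - 2 * (i + 1))) % 2 = 0 := by
        constructor
        · omega
        · omega
      rw [dnk, if_pos hcond]
      have e1 : n - 2 * (i + 1) + 1 = n - 2 * i - 1 := by omega
      have e2 : (n - (n - 2 * (i + 1))) / 2 = i + 1 := by omega
      rw [e1, e2, hX, Nat.mul_div_cancel_left _ (by omega : 0 < n + 1)]
    rw [hterm]
    omega

theorem sum_dnk (n : ℕ) :
    ∑ k ∈ Finset.range (n + 1), dnk n k = Nat.choose n (n / 2) := by
  have hfilter : ∑ k ∈ Finset.range (n + 1), dnk n k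
      = ∑ k ∈ (Finset.range (n + 1)).filter (fun k => (n - k) % 2 = 0), dnk n k := by
    rw [Finset.sum_filter_of_ne]
    intro k _ hne
    by_contra h
    exact hne (by rw [dnk, if_neg (by tauto)])
  have himg : (Finset.range (n + 1)).filter (fun k => (n - k) % 2 = 0)
      = (Finset.range (n / 2 + 1)).image (fun j => n - 2 * j) := by
    ext k
    simp only [Finset.mem_filter, Finset.mem_range, Finset.mem_image]
    constructor
    · rintro ⟨hk, hmod⟩
      exact ⟨(n - k) / 2, by omega, by omega⟩
    · rintro ⟨j, hj, rfl⟩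
      omega
  rw [hfilter, himg, Finset.sum_image (by intro a ha b hb hab; have ha' : a < n / 2 + 1 := (by simpa using ha); have hb' : b < n / 2 + 1 := (by simpa using hb); have hab' : n - 2 * a = n - 2 * b := hab; omega)]
  exact aux n (n / 2) (by omega)
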